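/- arXiv:2603.14773 — 3 statements merged into one kernel-verified Lean document; each statement's English description precedes it below -/
import Mathlib

section
/- One-step hybrid-order descent inequality: let L : ℝ^{d_c} × ℝ^{d_s} → ℝ be differentiable with β-Lipschitz gradient, fix θ = (θ_c, θ_s), and let a (valued in ℝ^{d_c}) and b (valued in ℝ^{d_s}) be square-integrable random vectors satisfying E[b] = ∇_s L(θ), E[‖b‖²] ≤ ‖∇_s L(θ)‖² + Ω_s, ‖E[a] − ∇_c L(θ)‖² ≤ B, and E[‖a‖²] ≤ C₁‖∇_c L(θ)‖² + Ω_c. If C₁ ≥ 1 and 0 < η ≤ 1/(2βC₁), then E[L(θ_c − η a, θ_s − η b)] ≤ L(θ) − (η/4)‖∇L(θ)‖² + (η/2)B + (βη²/2)(Ω_c + Ω_s). -/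
set_option maxHeartbeats 1000000
set_option synthInstance.maxHeartbeats 200000
open MeasureTheory intervalIntegral

lemma descent_aux {H : Type*} [NormedAddCommGroup H] [InnerProductSpace ℝ H] [CompleteSpace H]
    (L : H → ℝ) (hLdiff : Differentiable ℝ L) (β : ℝ) (hβ : 0 ≤ β)
    (hLip : ∀ x y, ‖gradient L x - gradient L y‖ ≤ β * ‖x - y‖) (x v : H) :
    |L (x + v) - L x - inner ℝ (gradient L x) v| ≤ β / 2 * ‖v‖ ^ 2 := by
  have hcurve : ∀ t : ℝ, HasDerivAt (fun t : ℝ => x + t • v) v t := by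
    intro t
    simpa using ((hasDerivAt_id t).smul_const v).const_add x
  have hderiv : ∀ t : ℝ, HasDerivAt (fun t : ℝ => L (x + t • v))
      (inner ℝ (gradient L (x + t • v)) v : ℝ) t := by
    intro t
    have h1 : HasGradientAt L (gradient L (x + t • v)) (x + t • v) :=
      (hLdiff _).hasGradientAt
    have := h1.hasFDerivAt.comp_hasDerivAt t (hcurve t)
    simpa [Function.comp_def] using this
  have hgradcont : Continuous fun p : H => gradient L p := by
    rcases eq_or_lt_of_le hβ with h0 | h0
    · have : ∀ p, gradient L p = gradient L x := by
        intro p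
        have := hLip p x
        rw [← h0, zero_mul] at this
        have := le_antisymm this (norm_nonneg _)
        rwa [norm_sub_eq_zero_iff] at this
      simp only [this]; exact continuous_const
    · have : LipschitzWith ⟨β, hβ⟩ (fun p => gradient L p) :=
        LipschitzWith.of_dist_le_mul (fun p q => by
          rw [dist_eq_norm, dist_eq_norm]; exact hLip p q)
      exact this.continuous
  have hcont : Continuous fun t : ℝ => (inner ℝ (gradient L (x + t • v)) v : ℝ) := by
    exact (continuous_inner.comp ((hgradcont.comp (by continuity)).prodMk continuous_const))
  have hFTC : L (x + v) - L x = ∫ t in (0:ℝ)..1, (inner ℝ (gradient L (x + t • v)) v : ℝ) := by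
    have := intervalIntegral.integral_eq_sub_of_hasDerivAt (a := 0) (b := 1)
      (f := fun t : ℝ => L (x + t • v)) (fun t _ => hderiv t) (hcont.intervalIntegrable 0 1)
    simp at this
    simpa using this.symm
  have hconst : (inner ℝ (gradient L x) v : ℝ) = ∫ t in (0:ℝ)..1, (inner ℝ (gradient L x) v : ℝ) := by
    simp
  rw [hFTC, hconst, ← intervalIntegral.integral_sub (hcont.intervalIntegrable 0 1)
    (intervalIntegrable_const)]
  have key : ∀ t ∈ Set.Icc (0:ℝ) 1,
      |(inner ℝ (gradient L (x + t • v)) v : ℝ) - inner ℝ (gradient L x) v| ≤ β * t * ‖v‖ ^ 2 := by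
    intro t ht
    rw [← inner_sub_left]
    calc |(inner ℝ (gradient L (x + t • v) - gradient L x) v : ℝ)|
        ≤ ‖gradient L (x + t • v) - gradient L x‖ * ‖v‖ := abs_real_inner_le_norm _ _
      _ ≤ (β * ‖(x + t • v) - x‖) * ‖v‖ := by
          gcongr; exact hLip _ _
      _ = β * t * ‖v‖ ^ 2 := by
          rw [add_sub_cancel_left, norm_smul, Real.norm_eq_abs, abs_of_nonneg ht.1]; ring
  calc |∫ t in (0:ℝ)..1, ((inner ℝ (gradient L (x + t • v)) v : ℝ) - inner ℝ (gradient L x) v)|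
      ≤ ∫ t in (0:ℝ)..1, |(inner ℝ (gradient L (x + t • v)) v : ℝ) - inner ℝ (gradient L x) v| :=
        intervalIntegral.abs_integral_le_integral_abs zero_le_one
    _ ≤ ∫ t in (0:ℝ)..1, β * t * ‖v‖ ^ 2 := by
        apply intervalIntegral.integral_mono_on zero_le_one
        · exact ((hcont.sub continuous_const).abs).intervalIntegrable 0 1
        · exact (Continuous.intervalIntegrable (by continuity) 0 1)
        · exact key
    _ = β / 2 * ‖v‖ ^ 2 := by
        have : ∫ t in (0:ℝ)..1, β * t * ‖v‖ ^ 2 = (β * ‖v‖^2) * ∫ t in (0:ℝ)..1, t := by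
          rw [← intervalIntegral.integral_const_mul]
          congr 1; ext t; ring
        rw [this, integral_id]; ring


/-- One-step hybrid-order descent inequality: let `L : ℝ^{d_c} × ℝ^{d_s} → ℝ` be
differentiable with `β`-Lipschitz gradient, fix `θ = (θ_c, θ_s)`, and let `a` (valued in
`ℝ^{d_c}`) and `b` (valued in `ℝ^{d_s}`) be square-integrable random vectors satisfying
`E[b] = ∇_s L(θ)`, `E[‖b‖²] ≤ ‖∇_s L(θ)‖² + Ω_s`, `‖E[a] − ∇_c L(θ)‖² ≤ B`, and
`E[‖a‖²] ≤ C₁‖∇_c L(θ)‖² + Ω_c`. If `C₁ ≥ 1` and `0 < η ≤ 1/(2βC₁)`, then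
`E[L(θ_c − ηa, θ_s − ηb)] ≤ L(θ) − (η/4)‖∇L(θ)‖² + (η/2)B + (βη²/2)(Ω_c + Ω_s)`. -/
theorem stmt5 {dc ds : ℕ} (hdc : 0 < dc) (hds : 0 < ds)
    (β C₁ η B Ωc Ωs : ℝ) (hβ : 0 < β) (hC₁ : 1 ≤ C₁)
    (hη : 0 < η) (hη' : η ≤ 1 / (2 * β * C₁))
    (hB : 0 ≤ B) (hΩc : 0 ≤ Ωc) (hΩs : 0 ≤ Ωs)
    (L : WithLp 2 (EuclideanSpace ℝ (Fin dc) × EuclideanSpace ℝ (Fin ds)) → ℝ)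
    (hLdiff : Differentiable ℝ L)
    (hLip : ∀ θ₁ θ₂, ‖gradient L θ₁ - gradient L θ₂‖ ≤ β * ‖θ₁ - θ₂‖)
    (θ : WithLp 2 (EuclideanSpace ℝ (Fin dc) × EuclideanSpace ℝ (Fin ds)))
    {Ω : Type*} {mΩ : MeasurableSpace Ω} (ℙ : Measure Ω) [IsProbabilityMeasure ℙ]
    (a : Ω → EuclideanSpace ℝ (Fin dc)) (b : Ω → EuclideanSpace ℝ (Fin ds))
    (ha2 : MemLp a 2 ℙ) (hb2 : MemLp b 2 ℙ)
    (hbmean : (∫ ω, b ω ∂ℙ) = (WithLp.equiv 2 _ (gradient L θ)).2)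
    (hbsec : (∫ ω, ‖b ω‖ ^ 2 ∂ℙ) ≤ ‖(WithLp.equiv 2 _ (gradient L θ)).2‖ ^ 2 + Ωs)
    (habias : ‖(∫ ω, a ω ∂ℙ) - (WithLp.equiv 2 _ (gradient L θ)).1‖ ^ 2 ≤ B)
    (hasec : (∫ ω, ‖a ω‖ ^ 2 ∂ℙ) ≤ C₁ * ‖(WithLp.equiv 2 _ (gradient L θ)).1‖ ^ 2 + Ωc) :
    (∫ ω, L ((WithLp.equiv 2 (EuclideanSpace ℝ (Fin dc) × EuclideanSpace ℝ (Fin ds))).symm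
        ((WithLp.equiv 2 _ θ).1 - η • a ω, (WithLp.equiv 2 _ θ).2 - η • b ω)) ∂ℙ)
      ≤ L θ - η / 4 * ‖gradient L θ‖ ^ 2 + η / 2 * B + β * η ^ 2 / 2 * (Ωc + Ωs) := by
  let E := EuclideanSpace ℝ (Fin dc)
  let F := EuclideanSpace ℝ (Fin ds)
  set g : WithLp 2 (E × F) := gradient L θ with hg
  set gc : E := (WithLp.equiv 2 (E × F) g).1 with hgc
  set gs : F := (WithLp.equiv 2 (E × F) g).2 with hgs
  set u : Ω → WithLp 2 (E × F) := fun ω => (WithLp.equiv 2 (E × F)).symm (a ω, b ω) with hu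
  -- basic integrabilities
  have hai : Integrable a ℙ := ha2.integrable one_le_two
  have hbi : Integrable b ℙ := hb2.integrable one_le_two
  have hna2 : Integrable (fun ω => ‖a ω‖ ^ 2) ℙ := ha2.norm.integrable_sq
  have hnb2 : Integrable (fun ω => ‖b ω‖ ^ 2) ℙ := hb2.norm.integrable_sq
  -- the point equality
  have hpoint : ∀ ω, (WithLp.equiv 2 (E × F)).symm
      ((WithLp.equiv 2 (E × F) θ).1 - η • a ω, (WithLp.equiv 2 (E × F) θ).2 - η • b ω)
      = θ - η • u ω := fun ω => rfl
  -- pointwise facts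
  have hnormu : ∀ ω, ‖u ω‖ ^ 2 = ‖a ω‖ ^ 2 + ‖b ω‖ ^ 2 := by
    intro ω
    rw [WithLp.prod_norm_sq_eq_of_L2]
    rfl
  have hinner : ∀ ω, (inner ℝ g (u ω) : ℝ) = inner ℝ gc (a ω) + inner ℝ gs (b ω) := by
    intro ω
    rw [WithLp.prod_inner_apply]
    rfl
  have hpt : ∀ ω, L (θ - η • u ω) ≤
      L θ - η * (inner ℝ gc (a ω) + inner ℝ gs (b ω))
        + β * η ^ 2 / 2 * (‖a ω‖ ^ 2 + ‖b ω‖ ^ 2) := by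
    intro ω
    have h := descent_aux L hLdiff β hβ.le hLip θ (-(η • u ω))
    rw [abs_le] at h
    have h1 := h.2
    have e1 : θ + -(η • u ω) = θ - η • u ω := by abel
    have e2 : (inner ℝ g (-(η • u ω)) : ℝ) = -(η * (inner ℝ gc (a ω) + inner ℝ gs (b ω))) := by
      rw [inner_neg_right, real_inner_smul_right, hinner]
    have e3 : ‖-(η • u ω)‖ ^ 2 = η ^ 2 * (‖a ω‖ ^ 2 + ‖b ω‖ ^ 2) := by
      rw [norm_neg, norm_smul, mul_pow, ← hnormu, Real.norm_eq_abs, sq_abs]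
    rw [e1, e2, e3] at h1
    nlinarith [h1]
  have hptabs : ∀ ω, ‖L (θ - η • u ω)‖ ≤
      |L θ| + η * ‖g‖ * (‖a ω‖ + ‖b ω‖) + β * η ^ 2 / 2 * (‖a ω‖ ^ 2 + ‖b ω‖ ^ 2) := by
    intro ω
    have h := descent_aux L hLdiff β hβ.le hLip θ (-(η • u ω))
    have e1 : θ + -(η • u ω) = θ - η • u ω := by abel
    rw [e1] at h
    have h2 : |(inner ℝ g (-(η • u ω)) : ℝ)| ≤ ‖g‖ * ‖η • u ω‖ := by
      rw [inner_neg_right, abs_neg]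
      exact (abs_real_inner_le_norm g _)
    have h3 : ‖η • u ω‖ ≤ η * (‖a ω‖ + ‖b ω‖) := by
      rw [norm_smul, Real.norm_eq_abs, abs_of_pos hη]
      have h4 : ‖u ω‖ ≤ ‖a ω‖ + ‖b ω‖ := by
        nlinarith [hnormu ω, norm_nonneg (u ω), norm_nonneg (a ω), norm_nonneg (b ω)]
      nlinarith [norm_nonneg (u ω)]
    have e3 : ‖-(η • u ω)‖ ^ 2 = η ^ 2 * (‖a ω‖ ^ 2 + ‖b ω‖ ^ 2) := by
      rw [norm_neg, norm_smul, mul_pow, ← hnormu, Real.norm_eq_abs, sq_abs]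
    rw [e3] at h
    rw [Real.norm_eq_abs]
    have := abs_abs_sub_abs_le_abs_sub (L (θ - η • u ω)) (L θ)
    have h5 : |L (θ - η • u ω) - L θ| ≤ |(inner ℝ g (-(η • u ω)) : ℝ)| + β / 2 * (η ^ 2 * (‖a ω‖ ^ 2 + ‖b ω‖ ^ 2)) := by
      calc |L (θ - η • u ω) - L θ| ≤ |L (θ - η • u ω) - L θ - inner ℝ g (-(η • u ω))| + |(inner ℝ g (-(η • u ω)) : ℝ)| := by
            have := abs_sub_abs_le_abs_sub (L (θ - η • u ω) - L θ) (inner ℝ g (-(η • u ω)) : ℝ)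
            have := abs_add_le (L (θ - η • u ω) - L θ - inner ℝ g (-(η • u ω))) (inner ℝ g (-(η • u ω)) : ℝ)
            simpa using this
        _ ≤ β / 2 * (η ^ 2 * (‖a ω‖ ^ 2 + ‖b ω‖ ^ 2)) + |(inner ℝ g (-(η • u ω)) : ℝ)| := by gcongr
        _ = _ := by ring
    have h6 : ‖g‖ * ‖η • u ω‖ ≤ ‖g‖ * (η * (‖a ω‖ + ‖b ω‖)) := by
      gcongr
    have h7 := abs_sub_abs_le_abs_sub (L (θ - η • u ω)) (L θ)
    nlinarith [abs_nonneg (L (θ - η • u ω))]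
  -- measurability
  have huaesm : AEStronglyMeasurable (fun ω => θ - η • u ω) ℙ := by
    have h1 : AEStronglyMeasurable (fun ω => (a ω, b ω)) ℙ :=
      ha2.aestronglyMeasurable.prodMk hb2.aestronglyMeasurable
    have h2 : AEStronglyMeasurable u ℙ :=
      ((WithLp.prodContinuousLinearEquiv 2 ℝ E F).symm.continuous).comp_aestronglyMeasurable h1
    exact aestronglyMeasurable_const.sub (h2.const_smul η)
  have hLaesm : AEStronglyMeasurable (fun ω => L (θ - η • u ω)) ℙ :=
    by
      have : ContinuousSMul ℝ (WithLp 2 (EuclideanSpace ℝ (Fin dc) × EuclideanSpace ℝ (Fin ds))) :=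
        IsBoundedSMul.continuousSMul
      exact hLdiff.continuous.comp_aestronglyMeasurable huaesm
  have hGint : Integrable (fun ω => |L θ| + η * ‖g‖ * (‖a ω‖ + ‖b ω‖)
      + β * η ^ 2 / 2 * (‖a ω‖ ^ 2 + ‖b ω‖ ^ 2)) ℙ := by
    exact ((integrable_const _).add (((hai.norm.add hbi.norm).const_mul _))).add
      ((hna2.add hnb2).const_mul _)
  have hLint : Integrable (fun ω => L (θ - η • u ω)) ℙ :=
    Integrable.mono' hGint hLaesm (ae_of_all _ hptabs)
  -- integrability of RHS
  have hf1 : Integrable (fun ω => (inner ℝ gc (a ω) : ℝ)) ℙ := hai.const_inner gc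
  have hf2 : Integrable (fun ω => (inner ℝ gs (b ω) : ℝ)) ℙ := hbi.const_inner gs
  have hRint : Integrable (fun ω => L θ - η * (inner ℝ gc (a ω) + inner ℝ gs (b ω))
      + β * η ^ 2 / 2 * (‖a ω‖ ^ 2 + ‖b ω‖ ^ 2)) ℙ :=
    ((integrable_const _).sub ((hf1.add hf2).const_mul η)).add ((hna2.add hnb2).const_mul _)
  -- main integral inequality
  have hmono : (∫ ω, L (θ - η • u ω) ∂ℙ) ≤
      ∫ ω, (L θ - η * (inner ℝ gc (a ω) + inner ℝ gs (b ω))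
        + β * η ^ 2 / 2 * (‖a ω‖ ^ 2 + ‖b ω‖ ^ 2)) ∂ℙ :=
    integral_mono hLint hRint hpt
  -- compute RHS integral
  have e1 : (inner ℝ gc (∫ ω, a ω ∂ℙ) : ℝ) = ∫ ω, (inner ℝ gc (a ω) : ℝ) ∂ℙ := (integral_inner hai gc).symm
  have e2 : (inner ℝ gs (∫ ω, b ω ∂ℙ) : ℝ) = ∫ ω, (inner ℝ gs (b ω) : ℝ) ∂ℙ := (integral_inner hbi gs).symm
  have iS : Integrable (fun ω => (inner ℝ gc (a ω) : ℝ) + inner ℝ gs (b ω)) ℙ := by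
    exact hf1.add hf2
  have iC : Integrable (fun ω => η * ((inner ℝ gc (a ω) : ℝ) + inner ℝ gs (b ω))) ℙ := by
    exact iS.const_mul η
  have iA : Integrable (fun ω => L θ - η * ((inner ℝ gc (a ω) : ℝ) + inner ℝ gs (b ω))) ℙ := by
    exact (integrable_const _).sub iC
  have iN : Integrable (fun ω => ‖a ω‖ ^ 2 + ‖b ω‖ ^ 2) ℙ := by exact hna2.add hnb2
  have iB : Integrable (fun ω => β * η ^ 2 / 2 * (‖a ω‖ ^ 2 + ‖b ω‖ ^ 2)) ℙ := by
    exact iN.const_mul _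
  have hRval : (∫ ω, (L θ - η * (inner ℝ gc (a ω) + inner ℝ gs (b ω))
        + β * η ^ 2 / 2 * (‖a ω‖ ^ 2 + ‖b ω‖ ^ 2)) ∂ℙ)
      = L θ - η * ((inner ℝ gc (∫ ω, a ω ∂ℙ) : ℝ) + inner ℝ gs (∫ ω, b ω ∂ℙ))
        + β * η ^ 2 / 2 * ((∫ ω, ‖a ω‖ ^ 2 ∂ℙ) + (∫ ω, ‖b ω‖ ^ 2 ∂ℙ)) := by
    rw [MeasureTheory.integral_add iA iB, MeasureTheory.integral_sub (integrable_const _) iC,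
      MeasureTheory.integral_const, MeasureTheory.integral_const_mul,
      MeasureTheory.integral_add hf1 hf2,
      MeasureTheory.integral_const_mul, MeasureTheory.integral_add hna2 hnb2, ← e1, ← e2]
    simp
  -- scalar estimates
  have hEb : (inner ℝ gs (∫ ω, b ω ∂ℙ) : ℝ) = ‖gs‖ ^ 2 := by
    rw [hbmean]; exact real_inner_self_eq_norm_sq gs
  have hEa : (inner ℝ gc (∫ ω, a ω ∂ℙ) : ℝ)
      = ‖gc‖ ^ 2 + inner ℝ gc ((∫ ω, a ω ∂ℙ) - gc) := by
    rw [inner_sub_right, real_inner_self_eq_norm_sq]; ring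
  have hbias : -((‖gc‖ ^ 2 + B) / 2) ≤ (inner ℝ gc ((∫ ω, a ω ∂ℙ) - gc) : ℝ) := by
    have h1 := abs_real_inner_le_norm gc ((∫ ω, a ω ∂ℙ) - gc)
    have h2 := neg_abs_le (inner ℝ gc ((∫ ω, a ω ∂ℙ) - gc) : ℝ)
    have h3 : ‖(∫ ω, a ω ∂ℙ) - gc‖ ^ 2 ≤ B := habias
    nlinarith [sq_nonneg (‖gc‖ - ‖(∫ ω, a ω ∂ℙ) - gc‖), norm_nonneg gc,
      norm_nonneg ((∫ ω, a ω ∂ℙ) - gc)]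
  have hnormg : ‖g‖ ^ 2 = ‖gc‖ ^ 2 + ‖gs‖ ^ 2 := by
    rw [WithLp.prod_norm_sq_eq_of_L2]; rfl
  have hηβ : 2 * β * C₁ * η ≤ 1 := by
    rw [le_div_iff₀ (by positivity)] at hη'
    linarith
  -- conclude
  calc (∫ ω, L ((WithLp.equiv 2 (E × F)).symm
        ((WithLp.equiv 2 (E × F) θ).1 - η • a ω, (WithLp.equiv 2 (E × F) θ).2 - η • b ω)) ∂ℙ)
      = ∫ ω, L (θ - η • u ω) ∂ℙ := by simp only [hpoint]
    _ ≤ L θ - η * ((inner ℝ gc (∫ ω, a ω ∂ℙ) : ℝ) + inner ℝ gs (∫ ω, b ω ∂ℙ))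
        + β * η ^ 2 / 2 * ((∫ ω, ‖a ω‖ ^ 2 ∂ℙ) + (∫ ω, ‖b ω‖ ^ 2 ∂ℙ)) := by
        rw [← hRval]; exact hmono
    _ ≤ L θ - η / 4 * ‖g‖ ^ 2 + η / 2 * B + β * η ^ 2 / 2 * (Ωc + Ωs) := by
        rw [hEa, hEb, hnormg]
        have hSa : (∫ ω, ‖a ω‖ ^ 2 ∂ℙ) ≤ C₁ * ‖gc‖ ^ 2 + Ωc := hasec
        have hSb : (∫ ω, ‖b ω‖ ^ 2 ∂ℙ) ≤ ‖gs‖ ^ 2 + Ωs := hbsec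
        have hX : (0:ℝ) ≤ ‖gc‖ ^ 2 := sq_nonneg _
        have hY : (0:ℝ) ≤ ‖gs‖ ^ 2 := sq_nonneg _
        nlinarith [mul_le_mul_of_nonneg_left hSa (by positivity : (0:ℝ) ≤ β * η ^ 2 / 2),
          mul_le_mul_of_nonneg_left hSb (by positivity : (0:ℝ) ≤ β * η ^ 2 / 2),
          mul_le_mul_of_nonneg_left hbias (by positivity : (0:ℝ) ≤ η),
          mul_nonneg (mul_nonneg hη.le hη.le) hX,
          mul_nonneg (mul_nonneg hη.le hη.le) hY,
          mul_nonneg hη.le hX, mul_nonneg hη.le hY,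
          mul_le_mul_of_nonneg_right hηβ (mul_nonneg hη.le hX),
          mul_le_mul_of_nonneg_right hηβ (mul_nonneg hη.le hY),
          mul_pos hβ hη, hC₁]
end

section
/- If u is a standard Gaussian random vector in ℝ^d and k is a real number with k ≥ 2, then E[‖u‖^k] ≤ (d + k)^{k/2}. In particular, E[‖u‖³] ≤ (d + 3)^{3/2}. -/
open MeasureTheory ProbabilityTheory
open scoped RealInnerProductSpace

/-- The standard Gaussian measure on `EuclideanSpace ℝ (Fin d)`: the product of `d`
copies of the one-dimensional Gaussian `N(0,1)`. -/
noncomputable def stdGaussian (d : ℕ) : Measure (EuclideanSpace ℝ (Fin d)) :=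
  Measure.map (MeasurableEquiv.toLp 2 (Fin d → ℝ))
    (Measure.pi fun _ : Fin d => gaussianReal 0 1)

section Aux
open Real
open scoped NNReal ENNReal



lemma gauss1D_eq {t : ℝ} (ht : t < 1/2) (g : ℝ → ℝ) :
    ∫ z, g z ∂(gaussianReal 0 1)
      = ∫ z, gaussianPDFReal 0 1 z * g z := by
  rw [gaussianReal_of_var_ne_zero 0 one_ne_zero]
  have hmeas : Measurable (fun x => (gaussianPDFReal 0 1 x).toNNReal) :=
    (measurable_gaussianPDFReal 0 1).real_toNNReal
  have : (gaussianPDF 0 1) = fun x => ((gaussianPDFReal 0 1 x).toNNReal : ENNReal) := by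
    funext x; rfl
  rw [this, integral_withDensity_eq_integral_smul hmeas]
  congr 1; funext x
  rw [NNReal.smul_def, smul_eq_mul, Real.coe_toNNReal _ (gaussianPDFReal_nonneg 0 1 x)]

lemma pdf_mul_exp {t : ℝ} (x : ℝ) :
    gaussianPDFReal 0 1 x * Real.exp (t * x ^ 2)
      = (Real.sqrt (2 * π))⁻¹ * Real.exp (-(1/2 - t) * x ^ 2) := by
  rw [gaussianPDFReal_def]
  simp only [NNReal.coe_one, mul_one, sub_zero]
  rw [mul_assoc, ← Real.exp_add]
  ring_nf

lemma gauss1D_integrable {t : ℝ} (ht : t < 1/2) :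
    Integrable (fun z => Real.exp (t * z ^ 2)) (gaussianReal 0 1) := by
  rw [gaussianReal_of_var_ne_zero 0 one_ne_zero]
  have hmeas : Measurable (fun x => (gaussianPDFReal 0 1 x).toNNReal) :=
    (measurable_gaussianPDFReal 0 1).real_toNNReal
  have hpdf : (gaussianPDF 0 1) = fun x => ((gaussianPDFReal 0 1 x).toNNReal : ENNReal) := by
    funext x; rfl
  rw [hpdf, integrable_withDensity_iff_integrable_smul hmeas]
  have : (fun x => ((gaussianPDFReal 0 1 x).toNNReal : ℝ) • Real.exp (t * x ^ 2))
      = fun x => (Real.sqrt (2 * π))⁻¹ * Real.exp (-(1/2 - t) * x ^ 2) := by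
    funext x
    rw [smul_eq_mul, Real.coe_toNNReal _ (gaussianPDFReal_nonneg 0 1 x), pdf_mul_exp]
  rw [show (fun x => ((gaussianPDFReal 0 1 x).toNNReal : ℝ≥0) • Real.exp (t * x ^ 2)) = fun x => ((gaussianPDFReal 0 1 x).toNNReal : ℝ) • Real.exp (t * x ^ 2) from rfl, this]
  exact (integrable_exp_neg_mul_sq (by linarith)).const_mul _

lemma gauss1D_value {t : ℝ} (ht : t < 1/2) :
    ∫ z, Real.exp (t * z ^ 2) ∂(gaussianReal 0 1) = (Real.sqrt (1 - 2*t))⁻¹ := by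
  rw [gauss1D_eq ht]
  simp_rw [pdf_mul_exp]
  rw [integral_const_mul, integral_gaussian]
  have h2 : (0:ℝ) < 1/2 - t := by linarith
  have hpi : (0:ℝ) < π := Real.pi_pos
  rw [show (1:ℝ) - 2*t = 2 * (1/2 - t) by ring]
  have h1 : Real.sqrt (π / (1/2 - t)) = Real.sqrt π / Real.sqrt (1/2 - t) := by
    rw [Real.sqrt_div hpi.le]
  have h2' : Real.sqrt (2 * (1/2 - t)) = Real.sqrt 2 * Real.sqrt (1/2 - t) := by
    rw [Real.sqrt_mul (by norm_num)]
  have h3 : Real.sqrt (2 * π) = Real.sqrt 2 * Real.sqrt π := by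
    rw [Real.sqrt_mul (by norm_num)]
  rw [h1, h2', h3]
  have hst : Real.sqrt (1/2 - t) ≠ 0 := by positivity
  have hsp : Real.sqrt π ≠ 0 := by positivity
  have hs2 : Real.sqrt 2 ≠ 0 := by positivity
  field_simp


lemma rpow_le_const_mul_exp {x p t : ℝ} (hx : 0 ≤ x) (hp : 0 < p) (ht : 0 < t) :
    x ^ p ≤ (p / (Real.exp 1 * t)) ^ p * Real.exp (t * x) := by
  rcases eq_or_lt_of_le hx with h0 | hx0
  · rw [← h0, Real.zero_rpow hp.ne']
    positivity
  · have hy : 0 < t * x / p := by positivity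
    have hx' : x = (p / t) * (t * x / p) := by field_simp
    calc x ^ p = (p / t) ^ p * (t * x / p) ^ p := by
          rw [← Real.mul_rpow (by positivity) hy.le, ← hx']
      _ ≤ (p / t) ^ p * Real.exp (p * (t * x / p - 1)) := by
          refine mul_le_mul_of_nonneg_left ?_ (by positivity)
          rw [show (t * x / p) ^ p = Real.exp (p * Real.log (t * x / p)) by
            rw [← Real.log_rpow hy, Real.exp_log (Real.rpow_pos_of_pos hy p)]]
          exact Real.exp_le_exp.2 (by
            have := Real.log_le_sub_one_of_pos hy
            nlinarith)
      _ = (p / (Real.exp 1 * t)) ^ p * Real.exp (t * x) := by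
          rw [show p / (Real.exp 1 * t) = (p / t) * (Real.exp 1)⁻¹ by rw [mul_comm, ← div_div, div_eq_mul_inv],
            Real.mul_rpow (by positivity) (by positivity),
            Real.inv_rpow (Real.exp_nonneg 1), Real.exp_one_rpow,
            show p * (t * x / p - 1) = t * x - p by rw [mul_sub, mul_one, mul_div_cancel₀ _ hp.ne'],
            Real.exp_sub]
          rw [div_eq_mul_inv]; ring


lemma pi_exp_eq {d : ℕ} {t : ℝ} :
    ∫ y : Fin d → ℝ, ∏ i, Real.exp (t * (y i)^2) ∂(Measure.pi fun _ => gaussianReal 0 1)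
      = (∫ z, Real.exp (t * z^2) ∂(gaussianReal 0 1)) ^ d := by
  letI : MeasureSpace ℝ := ⟨gaussianReal 0 1⟩
  haveI : SigmaFinite (volume : Measure ℝ) := by
    show SigmaFinite (gaussianReal 0 1); infer_instance
  have h := MeasureTheory.integral_fintype_prod_eq_pow (𝕜 := ℝ) (ι := Fin d) (μ := gaussianReal 0 1)
    (fun z => Real.exp (t * z^2))
  simpa [Fintype.card_fin] using h

lemma pi_exp_int {d : ℕ} {t : ℝ} (ht : t < 1/2)
    (h1 : Integrable (fun z => Real.exp (t * z ^ 2)) (gaussianReal 0 1)) :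
    Integrable (fun y : Fin d → ℝ => ∏ i, Real.exp (t * (y i)^2))
      (Measure.pi fun _ => gaussianReal 0 1) := by
  letI : MeasureSpace ℝ := ⟨gaussianReal 0 1⟩
  haveI : SigmaFinite (volume : Measure ℝ) := by
    show SigmaFinite (gaussianReal 0 1); infer_instance
  exact MeasureTheory.Integrable.fintype_prod (𝕜 := ℝ) (f := fun _ z => Real.exp (t * z^2))
    (fun i => h1)


-- arithmetic core: D = d + 2p, t = p / D
lemma arith_core {d : ℕ} (hd : 0 < d) {p : ℝ} (hp : 1 ≤ p) :
    (p / (Real.exp 1 * (p / ((d:ℝ) + 2*p)))) ^ p * ((Real.sqrt (1 - 2*(p / ((d:ℝ) + 2*p))))⁻¹) ^ d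
      ≤ ((d:ℝ) + 2*p) ^ p := by
  set D : ℝ := (d:ℝ) + 2*p with hD
  have hd' : (0:ℝ) < d := Nat.cast_pos.2 hd
  have hp0 : (0:ℝ) < p := by linarith
  have hD0 : (0:ℝ) < D := by positivity
  have h1 : p / (Real.exp 1 * (p / D)) = D / Real.exp 1 := by
    field_simp
  have h2 : 1 - 2 * (p / D) = (d:ℝ) / D := by
    field_simp; ring
  rw [h1, h2]
  have h3 : (Real.sqrt ((d:ℝ)/D))⁻¹ = Real.sqrt (D / (d:ℝ)) := by
    rw [← Real.sqrt_inv, inv_div]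
  rw [h3]
  have h4 : Real.sqrt (D / (d:ℝ)) ^ d = (D / (d:ℝ)) ^ ((d:ℝ)/2) := by
    rw [Real.sqrt_eq_rpow, ← Real.rpow_natCast ((D/(d:ℝ)) ^ ((1:ℝ)/2)) d,
      ← Real.rpow_mul (by positivity)]
    ring_nf
  rw [h4]
  have h5 : (D / (d:ℝ)) ^ ((d:ℝ)/2) ≤ Real.exp p := by
    rw [← Real.exp_log (x := (D / (d:ℝ)) ^ ((d:ℝ)/2)) (by positivity),
      Real.log_rpow (by positivity)]
    apply Real.exp_le_exp.2
    have hlog : Real.log (D / (d:ℝ)) ≤ D / (d:ℝ) - 1 :=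
      Real.log_le_sub_one_of_pos (by positivity)
    have : D / (d:ℝ) - 1 = 2 * p / (d:ℝ) := by field_simp; ring
    rw [this] at hlog
    calc (d:ℝ)/2 * Real.log (D / (d:ℝ)) ≤ (d:ℝ)/2 * (2*p/(d:ℝ)) := by
          apply mul_le_mul_of_nonneg_left hlog (by positivity)
      _ = p := by field_simp
  have h6 : (D / Real.exp 1) ^ p = D ^ p * (Real.exp p)⁻¹ := by
    rw [div_eq_mul_inv, Real.mul_rpow hD0.le (by positivity),
      Real.inv_rpow (Real.exp_nonneg 1), Real.exp_one_rpow]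
  rw [h6]
  calc D ^ p * (Real.exp p)⁻¹ * (D / (d:ℝ)) ^ ((d:ℝ)/2)
      ≤ D ^ p * (Real.exp p)⁻¹ * Real.exp p := by
        apply mul_le_mul_of_nonneg_left h5 (by positivity)
    _ = D ^ p := by
        rw [mul_assoc, inv_mul_cancel₀ (Real.exp_ne_zero p), mul_one]


lemma key {d : ℕ} (hd : 0 < d) {Ω : Type*} [MeasureSpace Ω]
    [IsProbabilityMeasure (ℙ : Measure Ω)]
    (u : Ω → EuclideanSpace ℝ (Fin d)) (hu : Measurable u)
    (hlaw : Measure.map u ℙ = stdGaussian d) {k : ℝ} (hk : 2 ≤ k) :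
    ∫ ω, ‖u ω‖ ^ k ∂ℙ ≤ ((d : ℝ) + k) ^ (k / 2) := by
  have hd' : (0:ℝ) < d := Nat.cast_pos.2 hd
  set p : ℝ := k / 2 with hp_def
  have hp : 1 ≤ p := by rw [hp_def]; linarith
  have hp0 : (0:ℝ) < p := by linarith
  set D : ℝ := (d:ℝ) + 2 * p with hD_def
  have hD0 : (0:ℝ) < D := by positivity
  set t : ℝ := p / D with ht_def
  have ht0 : (0:ℝ) < t := by positivity
  have htlt : t < 1/2 := by
    rw [ht_def, div_lt_iff₀ hD0]; rw [hD_def]; linarith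
  have hcont : Continuous (fun x : EuclideanSpace ℝ (Fin d) => ‖x‖ ^ k) :=
    Continuous.rpow_const continuous_norm (fun x => Or.inr (by linarith))
  -- step 1 : reduce to stdGaussian
  have step1 : ∫ ω, ‖u ω‖ ^ k ∂ℙ = ∫ x, ‖x‖ ^ k ∂(stdGaussian d) := by
    rw [← hlaw, integral_map hu.aemeasurable hcont.aestronglyMeasurable]
  -- step 2 : reduce to pi measure
  set Pd : Measure (Fin d → ℝ) := Measure.pi fun _ : Fin d => gaussianReal 0 1 with hPd
  have step2 : ∫ x, ‖x‖ ^ k ∂(stdGaussian d)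
      = ∫ y, ‖(MeasurableEquiv.toLp 2 (Fin d → ℝ)) y‖ ^ k ∂Pd := by
    rw [_root_.stdGaussian, integral_map (MeasurableEquiv.measurable _).aemeasurable
      hcont.aestronglyMeasurable]
  have hnorm : ∀ y : Fin d → ℝ,
      ‖(MeasurableEquiv.toLp 2 (Fin d → ℝ)) y‖ ^ k = (∑ i, y i ^ 2) ^ p := by
    intro y
    have h1 : ‖(MeasurableEquiv.toLp 2 (Fin d → ℝ)) y‖
        = Real.sqrt (∑ i, y i ^ 2) := by
      rw [EuclideanSpace.norm_eq]
      congr 1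
      refine Finset.sum_congr rfl fun i _ => ?_
      rw [show (MeasurableEquiv.toLp 2 (Fin d → ℝ)) y i = y i from rfl,
        Real.norm_eq_abs, sq_abs]
    have hS : (0:ℝ) ≤ ∑ i, y i ^ 2 := by positivity
    rw [h1, Real.sqrt_eq_rpow, ← Real.rpow_mul hS]
    congr 1
    rw [hp_def]; ring
  rw [step1, step2]
  simp_rw [hnorm]
  set C : ℝ := (p / (Real.exp 1 * t)) ^ p with hC_def
  have hC : 0 ≤ C := by positivity
  have hprod : ∀ y : Fin d → ℝ,
      Real.exp (t * ∑ i, y i ^ 2) = ∏ i, Real.exp (t * y i ^ 2) := fun y => by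
    rw [Finset.mul_sum, Real.exp_sum]
  have hint1 := gauss1D_integrable htlt
  have hgint : Integrable (fun y : Fin d → ℝ => C * Real.exp (t * ∑ i, y i ^ 2)) Pd := by
    simp_rw [hprod]
    exact (pi_exp_int htlt hint1).const_mul C
  have hmono : ∫ y, (∑ i, y i ^ 2) ^ p ∂Pd
      ≤ ∫ y, C * Real.exp (t * ∑ i, y i ^ 2) ∂Pd := by
    refine integral_mono_of_nonneg (ae_of_all _ fun y => ?_) hgint (ae_of_all _ fun y => ?_)
    · exact Real.rpow_nonneg (by positivity) p
    · exact rpow_le_const_mul_exp (by positivity) hp0 ht0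
  have hgval : ∫ y, C * Real.exp (t * ∑ i, y i ^ 2) ∂Pd
      = C * ((Real.sqrt (1 - 2*t))⁻¹) ^ d := by
    rw [integral_const_mul]
    simp_rw [hprod]
    rw [hPd, pi_exp_eq, gauss1D_value htlt]
  have harith := arith_core hd hp
  have hfinal : ((d:ℝ) + k) ^ (k/2) = D ^ p := by
    rw [hD_def, hp_def]; congr 1; ring
  rw [hfinal]
  calc ∫ y, (∑ i, y i ^ 2) ^ p ∂Pd ≤ C * ((Real.sqrt (1 - 2*t))⁻¹) ^ d := by
        rw [← hgval]; exact hmono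
    _ ≤ D ^ p := harith

end Aux

/-- If `u` is a standard Gaussian random vector in `ℝ^d` and `k` is a real number with `k ≥ 2`,
then `E[‖u‖^k] ≤ (d + k)^{k/2}`. In particular, `E[‖u‖³] ≤ (d + 3)^{3/2}`. -/
theorem stmt11 {d : ℕ} (hd : 0 < d)
    {Ω : Type*} [MeasureSpace Ω] [IsProbabilityMeasure (ℙ : Measure Ω)]
    (u : Ω → EuclideanSpace ℝ (Fin d)) (hu : Measurable u)
    (hlaw : Measure.map u ℙ = stdGaussian d)
    (k : ℝ) (hk : 2 ≤ k) :
    (∫ ω, ‖u ω‖ ^ k ∂ℙ ≤ ((d : ℝ) + k) ^ (k / 2)) ∧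
      (∫ ω, ‖u ω‖ ^ (3 : ℝ) ∂ℙ ≤ ((d : ℝ) + 3) ^ ((3 : ℝ) / 2)) :=
  ⟨key hd u hu hlaw hk, key hd u hu hlaw (by norm_num)⟩
end

section
/- Let u_1, …, u_P be i.i.d. standard Gaussian random vectors in ℝ^d, let c ≥ 0, and let δ_1, …, δ_P : ℝ^d → ℝ be measurable functions satisfying |δ_p(x)| ≤ c·‖x‖² for all x ∈ ℝ^d and all p. Then E[‖(1/P) Σ_{p=1}^P δ_p(u_p) u_p‖²] ≤ c²·d(d + 2)(d + 4). -/
open MeasureTheory ProbabilityTheory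
open scoped RealInnerProductSpace

open Real Set
open scoped NNReal ENNReal

lemma integrable_pow_mul_gauss (k : ℕ) :
    Integrable (fun x : ℝ => x ^ k * Real.exp (-(2:ℝ)⁻¹ * x ^ 2)) := by
  have h := integrable_rpow_mul_exp_neg_mul_sq (b := (2:ℝ)⁻¹) (by norm_num) (s := (k:ℝ))
    (lt_of_lt_of_le neg_one_lt_zero (Nat.cast_nonneg k))
  simpa [Real.rpow_natCast] using h

lemma integral_pow_mul_gauss_even (n : ℕ) :
    ∫ x : ℝ, x ^ (2*n) * Real.exp (-(2:ℝ)⁻¹ * x ^ 2)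
      = 2 ^ n * Real.sqrt 2 * Real.Gamma (n + 1/2) := by
  have h2 : ((2*n : ℕ):ℝ) = 2 * (n:ℝ) := by push_cast; ring
  calc ∫ x : ℝ, x ^ (2*n) * Real.exp (-(2:ℝ)⁻¹ * x ^ 2)
      = ∫ x : ℝ, |x| ^ (2*n) * Real.exp (-(2:ℝ)⁻¹ * |x| ^ 2) := by
        congr 1; funext x; simp [pow_mul, sq_abs]
    _ = 2 * ∫ x in Ioi (0:ℝ), x ^ (2*n) * Real.exp (-(2:ℝ)⁻¹ * x ^ 2) :=
        integral_comp_abs (f := fun t : ℝ => t ^ (2*n) * Real.exp (-(2:ℝ)⁻¹ * t ^ 2))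
    _ = 2 * ∫ x in Ioi (0:ℝ), x ^ ((2*n : ℕ):ℝ) * Real.exp (-(2:ℝ)⁻¹ * x ^ (2:ℝ)) := by
        congr 1
        refine setIntegral_congr_fun measurableSet_Ioi (fun x hx => ?_)
        rw [Real.rpow_natCast, Real.rpow_two]
    _ = 2 * ((2:ℝ)⁻¹ ^ (-(((2*n : ℕ):ℝ) + 1) / 2) * (1 / 2) * Real.Gamma ((((2*n:ℕ):ℝ) + 1) / 2)) := by
        rw [integral_rpow_mul_exp_neg_mul_rpow (by norm_num)
          (lt_of_lt_of_le neg_one_lt_zero (Nat.cast_nonneg _)) (by norm_num)]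
    _ = 2 ^ n * Real.sqrt 2 * Real.Gamma (n + 1/2) := by
        rw [h2]
        rw [show (-(2 * (n:ℝ) + 1) / 2) = -((n:ℝ) + 1/2) by ring,
          show ((2 * (n:ℝ) + 1) / 2) = (n:ℝ) + 1/2 by ring]
        rw [Real.inv_rpow (by norm_num), ← Real.rpow_neg (by norm_num), neg_neg,
          Real.rpow_add (by norm_num), Real.rpow_natCast,
          show ((2:ℝ)) ^ ((1:ℝ)/2) = Real.sqrt 2 from by
            rw [Real.sqrt_eq_rpow]]
        ring

lemma gaussianPDFReal_zero_one (x : ℝ) :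
    gaussianPDFReal 0 1 x = (Real.sqrt (2*π))⁻¹ * Real.exp (-(2:ℝ)⁻¹ * x ^ 2) := by
  simp only [gaussianPDFReal, NNReal.coe_one, mul_one, sub_zero]
  congr 2
  ring

lemma integral_pow_gaussianReal (k : ℕ) :
    ∫ x, x ^ k ∂(gaussianReal 0 1)
      = (Real.sqrt (2*π))⁻¹ * ∫ x : ℝ, x ^ k * Real.exp (-(2:ℝ)⁻¹ * x ^ 2) := by
  rw [gaussianReal_of_var_ne_zero 0 one_ne_zero]
  have hpdf : gaussianPDF 0 1 = fun x => ((Real.toNNReal (gaussianPDFReal 0 1 x) : ℝ≥0) : ℝ≥0∞) :=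
    rfl
  rw [hpdf, integral_withDensity_eq_integral_smul
    ((measurable_gaussianPDFReal 0 1).real_toNNReal) (fun x => x ^ k)]
  rw [← integral_const_mul]
  congr 1; funext x
  rw [NNReal.smul_def, smul_eq_mul, Real.coe_toNNReal _ (gaussianPDFReal_nonneg 0 1 x),
    gaussianPDFReal_zero_one]
  ring

lemma integrable_pow_gaussianReal (k : ℕ) :
    Integrable (fun x : ℝ => x ^ k) (gaussianReal 0 1) := by
  rw [gaussianReal_of_var_ne_zero 0 one_ne_zero]
  rw [integrable_withDensity_iff (measurable_gaussianPDF 0 1)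
    (ae_of_all _ fun x => ENNReal.ofReal_lt_top)]
  have : (fun x : ℝ => x ^ k * (gaussianPDF 0 1 x).toReal)
      = fun x => (Real.sqrt (2*π))⁻¹ * (x ^ k * Real.exp (-(2:ℝ)⁻¹ * x ^ 2)) := by
    funext x
    rw [gaussianPDF, ENNReal.toReal_ofReal (gaussianPDFReal_nonneg 0 1 x),
      gaussianPDFReal_zero_one]
    ring
  rw [this]
  exact (integrable_pow_mul_gauss k).const_mul _

lemma sqrt_pi_ne_zero : Real.sqrt π ≠ 0 :=
  ne_of_gt (Real.sqrt_pos.mpr pi_pos)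

lemma integral_pow_gaussianReal_even (n : ℕ) :
    ∫ x, x ^ (2*n) ∂(gaussianReal 0 1) = 2 ^ n * Real.Gamma (n + 1/2) / Real.sqrt π := by
  rw [integral_pow_gaussianReal, integral_pow_mul_gauss_even,
    Real.sqrt_mul (by norm_num : (0:ℝ) ≤ 2)]
  have h2 : Real.sqrt 2 ≠ 0 := ne_of_gt (Real.sqrt_pos.mpr two_pos)
  field_simp

lemma gauss_m0 : ∫ x, x ^ 0 ∂(gaussianReal 0 1) = 1 := by
  simp

lemma gamma_32 : Real.Gamma ((1:ℕ) + 1/2 : ℝ) = (1/2) * Real.sqrt π := by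
  rw [show ((1:ℕ) + 1/2 : ℝ) = 1/2 + 1 by norm_num, Real.Gamma_add_one (by norm_num),
    Real.Gamma_one_half_eq]

lemma gamma_52 : Real.Gamma ((2:ℕ) + 1/2 : ℝ) = (3/4) * Real.sqrt π := by
  rw [show ((2:ℕ) + 1/2 : ℝ) = ((1:ℕ) + 1/2 : ℝ) + 1 by norm_num,
    Real.Gamma_add_one (by norm_num), gamma_32]
  norm_num
  ring

lemma gamma_72 : Real.Gamma ((3:ℕ) + 1/2 : ℝ) = (15/8) * Real.sqrt π := by
  rw [show ((3:ℕ) + 1/2 : ℝ) = ((2:ℕ) + 1/2 : ℝ) + 1 by norm_num,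
    Real.Gamma_add_one (by norm_num), gamma_52]
  norm_num
  ring

lemma gauss_m2 : ∫ x, x ^ 2 ∂(gaussianReal 0 1) = 1 := by
  have := integral_pow_gaussianReal_even 1
  rw [gamma_32] at this
  norm_num at this
  rw [this]
  field_simp

lemma gauss_m4 : ∫ x, x ^ 4 ∂(gaussianReal 0 1) = 3 := by
  have := integral_pow_gaussianReal_even 2
  rw [gamma_52] at this
  norm_num at this
  rw [this]
  field_simp

lemma gauss_m6 : ∫ x, x ^ 6 ∂(gaussianReal 0 1) = 15 := by
  have := integral_pow_gaussianReal_even 3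
  rw [gamma_72] at this
  norm_num at this
  rw [this]
  field_simp

lemma pi_monomial_integral {d : ℕ} (m : Fin d → ℕ) :
    ∫ y : Fin d → ℝ, ∏ l, (y l) ^ (m l) ∂(Measure.pi fun _ => gaussianReal 0 1)
      = ∏ l, ∫ t, t ^ (m l) ∂(gaussianReal 0 1) := by
  letI : MeasureSpace ℝ := ⟨gaussianReal 0 1⟩
  haveI : SigmaFinite (volume : Measure ℝ) := by
    change SigmaFinite (gaussianReal 0 1); infer_instance
  exact integral_fintype_prod_eq_prod (fun l t => t ^ (m l))

lemma pi_monomial_integrable {d : ℕ} (m : Fin d → ℕ) :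
    Integrable (fun y : Fin d → ℝ => ∏ l, (y l) ^ (m l))
      (Measure.pi fun _ => gaussianReal 0 1) := by
  letI : MeasureSpace ℝ := ⟨gaussianReal 0 1⟩
  haveI : SigmaFinite (volume : Measure ℝ) := by
    change SigmaFinite (gaussianReal 0 1); infer_instance
  exact Integrable.fintype_prod (f := fun (l : Fin d) (t : ℝ) => t ^ (m l))
    (fun i => integrable_pow_gaussianReal _)


lemma prod_pow_single {d : ℕ} (y : Fin d → ℝ) (i : Fin d) :
    (∏ l, (y l) ^ (if l = i then 2 else 0)) = (y i)^2 := by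
  have h : ∀ l, (y l) ^ (if l = i then 2 else 0) = if l = i then (y l)^2 else 1 := by
    intro l; split <;> simp
  simp_rw [h]
  simp

def eExp {d : ℕ} (i j k l : Fin d) : ℕ :=
  (if l = i then 2 else 0) + (if l = j then 2 else 0) + (if l = k then 2 else 0)

lemma monomial_eq {d : ℕ} (i j k : Fin d) (y : Fin d → ℝ) :
    (y i)^2 * (y j)^2 * (y k)^2 = ∏ l, (y l) ^ (eExp i j k l) := by
  simp only [eExp, pow_add, Finset.prod_mul_distrib, prod_pow_single]

lemma integral_monomial {d : ℕ} (i j k : Fin d) :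
    ∫ y : Fin d → ℝ, (y i)^2 * (y j)^2 * (y k)^2 ∂(Measure.pi fun _ => gaussianReal 0 1)
      = 1 + 2*((if i = j then (1:ℝ) else 0) + (if i = k then (1:ℝ) else 0)
          + (if j = k then (1:ℝ) else 0))
        + 8*((if i = j then (1:ℝ) else 0) * (if j = k then (1:ℝ) else 0)) := by
  have hcal : ∫ y : Fin d → ℝ, (y i)^2 * (y j)^2 * (y k)^2
        ∂(Measure.pi fun _ => gaussianReal 0 1)
      = ∏ l, ∫ t, t ^ (eExp i j k l) ∂(gaussianReal 0 1) := by
    simp_rw [monomial_eq]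
    exact pi_monomial_integral _
  rw [hcal]
  rcases eq_or_ne i j with rfl | hij
  · rcases eq_or_ne i k with rfl | hik
    · have he : ∀ l, (∫ t : ℝ, t ^ (eExp i i i l) ∂(gaussianReal 0 1))
          = if l = i then (15:ℝ) else 1 := by
        intro l; by_cases h : l = i <;> simp [eExp, h, gauss_m6, gauss_m0]
      simp_rw [he]
      simp [Finset.prod_ite_eq']
      norm_num
    · have he : ∀ l, (∫ t : ℝ, t ^ (eExp i i k l) ∂(gaussianReal 0 1))
          = if l = i then (3:ℝ) else 1 := by
        intro l
        by_cases h : l = i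
        · simp [eExp, h, hik, gauss_m4]
        · by_cases h2 : l = k <;>
            simp [eExp, h, h2, Ne.symm hik, gauss_m2, gauss_m0]
      simp_rw [he]
      simp [Finset.prod_ite_eq', hik]
      norm_num
  · rcases eq_or_ne i k with rfl | hik
    · have he : ∀ l, (∫ t : ℝ, t ^ (eExp i j i l) ∂(gaussianReal 0 1))
          = if l = i then (3:ℝ) else 1 := by
        intro l
        by_cases h : l = i
        · simp [eExp, h, hij, Ne.symm hij, gauss_m4]
        · by_cases h2 : l = j <;>
            simp [eExp, h, h2, Ne.symm hij, gauss_m2, gauss_m0]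
      simp_rw [he]
      simp [Finset.prod_ite_eq', hij, Ne.symm hij]
      norm_num
    · rcases eq_or_ne j k with rfl | hjk
      · have he : ∀ l, (∫ t : ℝ, t ^ (eExp i j j l) ∂(gaussianReal 0 1))
            = if l = j then (3:ℝ) else 1 := by
          intro l
          by_cases h : l = j
          · simp [eExp, h, Ne.symm hij, gauss_m4]
          · by_cases h2 : l = i <;>
              simp [eExp, h, h2, hij, gauss_m2, gauss_m0]
        simp_rw [he]
        simp [Finset.prod_ite_eq', hij, hik]
        norm_num
      · have he : ∀ l, (∫ t : ℝ, t ^ (eExp i j k l) ∂(gaussianReal 0 1)) = 1 := by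
          intro l
          by_cases h1 : l = i <;> by_cases h2 : l = j <;> by_cases h3 : l = k <;>
            simp_all [eExp, gauss_m2, gauss_m0]
        rw [Finset.prod_congr rfl (fun l _ => he l)]
        simp [hij, hik, hjk]

lemma integrable_monomial {d : ℕ} (i j k : Fin d) :
    Integrable (fun y : Fin d → ℝ => (y i)^2 * (y j)^2 * (y k)^2)
      (Measure.pi fun _ => gaussianReal 0 1) := by
  have h := pi_monomial_integrable (eExp i j k)
  simp only [← monomial_eq] at h
  exact h

lemma sum_expand {d : ℕ} (y : Fin d → ℝ) :
    (∑ l, (y l)^2)^3 = ∑ i, ∑ j, ∑ k, (y i)^2 * (y j)^2 * (y k)^2 := by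
  rw [show (∑ l, (y l)^2)^3 = ((∑ l, (y l)^2) * (∑ l, (y l)^2)) * (∑ l, (y l)^2) by ring,
    Finset.sum_mul_sum]
  rw [Finset.sum_mul]
  simp_rw [Finset.sum_mul, Finset.mul_sum]

lemma pi_sixth_moment {d : ℕ} :
    ∫ y : Fin d → ℝ, (∑ l, (y l)^2)^3 ∂(Measure.pi fun _ => gaussianReal 0 1)
      = (d:ℝ) * ((d:ℝ) + 2) * ((d:ℝ) + 4) := by
  simp_rw [sum_expand]
  rw [integral_finset_sum _ (fun i _ => integrable_finset_sum _
    (fun j _ => integrable_finset_sum _ (fun k _ => integrable_monomial i j k)))]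
  have h1 : ∀ i : Fin d, ∫ y : Fin d → ℝ, ∑ j, ∑ k, (y i)^2 * (y j)^2 * (y k)^2
      ∂(Measure.pi fun _ => gaussianReal 0 1)
      = ∑ j, ∑ k, ∫ y : Fin d → ℝ, (y i)^2 * (y j)^2 * (y k)^2
        ∂(Measure.pi fun _ => gaussianReal 0 1) := by
    intro i
    rw [integral_finset_sum _ (fun j _ => integrable_finset_sum _
      (fun k _ => integrable_monomial i j k))]
    exact Finset.sum_congr rfl fun j _ =>
      integral_finset_sum _ (fun k _ => integrable_monomial i j k)
  simp_rw [h1, integral_monomial]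
  have step1 : ∀ x x1 : Fin d, (∑ x2 : Fin d, (1 + 2*((if x = x1 then (1:ℝ) else 0)
        + (if x = x2 then (1:ℝ) else 0) + (if x1 = x2 then (1:ℝ) else 0))
        + 8*((if x = x1 then (1:ℝ) else 0) * (if x1 = x2 then (1:ℝ) else 0))))
      = (d:ℝ) + 2*((d:ℝ)*(if x = x1 then (1:ℝ) else 0) + 1 + 1)
        + 8*(if x = x1 then (1:ℝ) else 0) := by
    intro x x1
    by_cases h : x = x1 <;>
      simp [h, Finset.sum_add_distrib, Finset.sum_ite_eq, Finset.sum_const,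
        Finset.card_univ, ← Finset.mul_sum] <;> ring
  have step2 : ∀ x : Fin d, (∑ x1 : Fin d, ((d:ℝ)
        + 2*((d:ℝ)*(if x = x1 then (1:ℝ) else 0) + 1 + 1)
        + 8*(if x = x1 then (1:ℝ) else 0)))
      = (d:ℝ)*(d:ℝ) + 6*(d:ℝ) + 8 := by
    intro x
    simp [Finset.sum_add_distrib, Finset.sum_ite_eq, Finset.sum_const,
      Finset.card_univ, ← Finset.mul_sum]
    ring
  calc ∑ i : Fin d, ∑ j : Fin d, ∑ k : Fin d, (1 + 2*((if i = j then (1:ℝ) else 0)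
        + (if i = k then (1:ℝ) else 0) + (if j = k then (1:ℝ) else 0))
        + 8*((if i = j then (1:ℝ) else 0) * (if j = k then (1:ℝ) else 0)))
      = ∑ i : Fin d, ∑ j : Fin d, ((d:ℝ) + 2*((d:ℝ)*(if i = j then (1:ℝ) else 0) + 1 + 1)
        + 8*(if i = j then (1:ℝ) else 0)) :=
        Finset.sum_congr rfl fun i _ => Finset.sum_congr rfl fun j _ => step1 i j
    _ = ∑ i : Fin d, ((d:ℝ)*(d:ℝ) + 6*(d:ℝ) + 8) :=
        Finset.sum_congr rfl fun i _ => step2 i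
    _ = (d:ℝ) * ((d:ℝ) + 2) * ((d:ℝ) + 4) := by
        simp [Finset.sum_const, Finset.card_univ]
        ring


lemma norm_pow_six {d : ℕ} (x : EuclideanSpace ℝ (Fin d)) :
    ‖x‖^6 = (∑ l, (x l)^2)^3 := by
  rw [EuclideanSpace.norm_eq, show (6:ℕ) = 2*3 from rfl, pow_mul,
    Real.sq_sqrt (by positivity)]
  simp [sq_abs]

lemma integrable_sum_sq_cube {d : ℕ} :
    Integrable (fun y : Fin d → ℝ => (∑ l, (y l)^2)^3)
      (Measure.pi fun _ => gaussianReal 0 1) := by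
  simp_rw [sum_expand]
  exact integrable_finset_sum _ (fun i _ => integrable_finset_sum _
    (fun j _ => integrable_finset_sum _ (fun k _ => integrable_monomial i j k)))

lemma integral_norm6_stdGaussian {d : ℕ} :
    ∫ x, ‖x‖^6 ∂(stdGaussian d) = (d:ℝ) * ((d:ℝ) + 2) * ((d:ℝ) + 4) := by
  rw [_root_.stdGaussian, integral_map_equiv]
  simp_rw [norm_pow_six]
  exact pi_sixth_moment

lemma integrable_norm6_stdGaussian {d : ℕ} :
    Integrable (fun x : EuclideanSpace ℝ (Fin d) => ‖x‖^6) (stdGaussian d) := by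
  rw [_root_.stdGaussian, integrable_map_equiv]
  have : ((fun x : EuclideanSpace ℝ (Fin d) => ‖x‖^6)
      ∘ (MeasurableEquiv.toLp 2 (Fin d → ℝ)))
      = fun y : Fin d → ℝ => (∑ l, (y l)^2)^3 := by
    funext y
    simp only [Function.comp_apply, norm_pow_six]
    rfl
  rw [this]
  exact integrable_sum_sq_cube

/-- Let `u_1, …, u_P` be i.i.d. standard Gaussian random vectors in `ℝ^d`, let `c ≥ 0`, and let
`δ_1, …, δ_P : ℝ^d → ℝ` be measurable functions with `|δ_p(x)| ≤ c‖x‖²` for all `x` and `p`.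
Then `E[‖(1/P) Σ_p δ_p(u_p) u_p‖²] ≤ c²·d(d + 2)(d + 4)`. -/
theorem stmt12 {d P : ℕ} (hd : 0 < d) (hP : 0 < P)
    {Ω : Type*} [MeasureSpace Ω] [IsProbabilityMeasure (ℙ : Measure Ω)]
    (u : Fin P → Ω → EuclideanSpace ℝ (Fin d)) (hu : ∀ p, Measurable (u p))
    (hindep : iIndepFun u ℙ)
    (hlaw : ∀ p, Measure.map (u p) ℙ = stdGaussian d)
    (c : ℝ) (hc : 0 ≤ c)
    (δ : Fin P → EuclideanSpace ℝ (Fin d) → ℝ) (hδmeas : ∀ p, Measurable (δ p))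
    (hδ : ∀ p x, |δ p x| ≤ c * ‖x‖ ^ 2) :
    ∫ ω, ‖(P : ℝ)⁻¹ • ∑ p : Fin P, δ p (u p ω) • u p ω‖ ^ 2 ∂ℙ
      ≤ c ^ 2 * ((d : ℝ) * ((d : ℝ) + 2) * ((d : ℝ) + 4)) := by
  have hPne : (P:ℝ) ≠ 0 := Nat.cast_ne_zero.mpr hP.ne'
  have hsm : AEStronglyMeasurable (fun x : EuclideanSpace ℝ (Fin d) => ‖x‖^6)
      (stdGaussian d) := (continuous_norm.pow 6).aestronglyMeasurable
  have hmom : ∀ p, ∫ ω, ‖u p ω‖^6 ∂ℙ = (d:ℝ) * ((d:ℝ) + 2) * ((d:ℝ) + 4) := by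
    intro p
    have h1 : ∫ ω, ‖u p ω‖^6 ∂ℙ = ∫ x, ‖x‖^6 ∂(Measure.map (u p) ℙ) := by
      rw [integral_map (hu p).aemeasurable]
      rw [hlaw p]; exact hsm
    rw [h1, hlaw p, integral_norm6_stdGaussian]
  have hint : ∀ p, Integrable (fun ω => ‖u p ω‖^6) ℙ := by
    intro p
    have h := integrable_norm6_stdGaussian (d := d)
    rw [← hlaw p] at h
    exact (integrable_map_measure (by rw [hlaw p]; exact hsm) (hu p).aemeasurable).mp h
  have hpt : ∀ ω, ‖(P : ℝ)⁻¹ • ∑ p : Fin P, δ p (u p ω) • u p ω‖ ^ 2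
      ≤ (P:ℝ)⁻¹ * ∑ p : Fin P, c^2 * ‖u p ω‖^6 := by
    intro ω
    have h1 : ‖(P : ℝ)⁻¹ • ∑ p : Fin P, δ p (u p ω) • u p ω‖ ^ 2
        = ((P:ℝ)⁻¹)^2 * ‖∑ p : Fin P, δ p (u p ω) • u p ω‖^2 := by
      rw [norm_smul, mul_pow, Real.norm_eq_abs, sq_abs]
    have h2 : ‖∑ p : Fin P, δ p (u p ω) • u p ω‖^2
        ≤ (∑ p : Fin P, ‖δ p (u p ω) • u p ω‖)^2 :=
      pow_le_pow_left₀ (norm_nonneg _) (norm_sum_le _ _) 2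
    have h3 : (∑ p : Fin P, ‖δ p (u p ω) • u p ω‖)^2
        ≤ (P:ℝ) * ∑ p : Fin P, ‖δ p (u p ω) • u p ω‖^2 := by
      have := sq_sum_le_card_mul_sum_sq (s := (Finset.univ : Finset (Fin P)))
        (f := fun p => ‖δ p (u p ω) • u p ω‖)
      simpa [Finset.card_univ] using this
    have h4 : ∀ p : Fin P, ‖δ p (u p ω) • u p ω‖^2 ≤ c^2 * ‖u p ω‖^6 := by
      intro p
      rw [norm_smul, mul_pow]
      have hb : ‖δ p (u p ω)‖^2 ≤ (c * ‖u p ω‖^2)^2 := by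
        apply pow_le_pow_left₀ (norm_nonneg _)
        rw [Real.norm_eq_abs]; exact hδ p _
      calc ‖δ p (u p ω)‖^2 * ‖u p ω‖^2 ≤ (c * ‖u p ω‖^2)^2 * ‖u p ω‖^2 := by
            exact mul_le_mul_of_nonneg_right hb (by positivity)
        _ = c^2 * ‖u p ω‖^6 := by ring
    calc ‖(P : ℝ)⁻¹ • ∑ p : Fin P, δ p (u p ω) • u p ω‖ ^ 2
        = ((P:ℝ)⁻¹)^2 * ‖∑ p : Fin P, δ p (u p ω) • u p ω‖^2 := h1
      _ ≤ ((P:ℝ)⁻¹)^2 * ((P:ℝ) * ∑ p : Fin P, ‖δ p (u p ω) • u p ω‖^2) := by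
          apply mul_le_mul_of_nonneg_left (h2.trans h3) (by positivity)
      _ ≤ ((P:ℝ)⁻¹)^2 * ((P:ℝ) * ∑ p : Fin P, c^2 * ‖u p ω‖^6) := by
          apply mul_le_mul_of_nonneg_left _ (by positivity)
          apply mul_le_mul_of_nonneg_left _ (by positivity)
          exact Finset.sum_le_sum (fun p _ => h4 p)
      _ = (P:ℝ)⁻¹ * ∑ p : Fin P, c^2 * ‖u p ω‖^6 := by
          field_simp
  have hG : Integrable (fun ω => (P:ℝ)⁻¹ * ∑ p : Fin P, c^2 * ‖u p ω‖^6) ℙ :=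
    ((integrable_finset_sum _ (fun p _ => (hint p).const_mul _)).const_mul _)
  have hle := integral_mono_of_nonneg (ae_of_all _ (fun ω => by positivity)) hG
    (ae_of_all _ hpt)
  refine hle.trans ?_
  rw [integral_const_mul, integral_finset_sum _ (fun p _ => (hint p).const_mul _)]
  have : ∀ p : Fin P, ∫ ω, c^2 * ‖u p ω‖^6 ∂ℙ
      = c^2 * ((d:ℝ) * ((d:ℝ) + 2) * ((d:ℝ) + 4)) := by
    intro p
    rw [integral_const_mul, hmom p]
  rw [Finset.sum_congr rfl (fun p _ => this p), Finset.sum_const, Finset.card_univ,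
    Fintype.card_fin, nsmul_eq_mul]
  rw [← mul_assoc, inv_mul_cancel₀ hPne, one_mul]
end
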